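/- Let L ≥ 1.12, let g_1 ≥ g_2 ≥ … ≥ g_m > 0 and let p_1, …, p_m > 0 with p_1 + … + p_m = 1. Assume that log(g_1/g_m) ≤ 1/L and that Σ_{j<m} 2L·log(g_j/g_m)·p_j ≤ 1. Then Σ_{i≤m} (p_i/g_i) · exp( −L · Σ_{j<i} (log(g_j/g_i))² · p_j ) ≤ 1/(p_1 g_1 + … + p_m g_m). -/

import Mathlib

open Finset

lemma exp_add_exp_neg_le_key (L d : ℝ) (hL : 1.12 ≤ L) (hd0 : 0 ≤ d) (hd : d ≤ 1 / L) :
    Real.exp d + Real.exp (-d) ≤ 2 + L * d ^ 2 := by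
  have hL0 : (0:ℝ) < L := by linarith
  have hLd : d * L ≤ 1 := by rwa [le_div_iff₀ hL0] at hd
  have hd1 : |d| ≤ 1 := by
    rw [abs_of_nonneg hd0]
    nlinarith
  have hnd1 : |(-d)| ≤ 1 := by rwa [abs_neg]
  have h1 := Real.exp_bound hd1 (n := 4) (by norm_num)
  have h2 := Real.exp_bound hnd1 (n := 4) (by norm_num)
  rw [abs_of_nonneg hd0] at h1
  rw [abs_neg, abs_of_nonneg hd0] at h2
  simp only [Finset.sum_range_succ, Finset.sum_range_zero, Nat.factorial] at h1 h2
  norm_num at h1 h2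
  rw [abs_le] at h1 h2
  have e1 : Real.exp d ≤ 1 + d + d^2/2 + d^3/6 + d^4 * (5/96) := by nlinarith [h1.2]
  have e2 : Real.exp (-d) ≤ 1 - d + d^2/2 - d^3/6 + d^4 * (5/96) := by nlinarith [h2.2]
  have h5 : (5:ℝ) ≤ 48 * L^2 * (L - 1) := by nlinarith
  have h6 : (d * L) ^ 2 ≤ 1 := by nlinarith [mul_nonneg hd0 hL0.le]
  have h7 : d^4 * L^2 ≤ d^2 := by nlinarith [sq_nonneg d, mul_nonneg hd0 hd0]
  have h8 : (L - 1) * (d^4 * L^2) ≤ (L - 1) * d^2 :=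
    mul_le_mul_of_nonneg_left h7 (by linarith)
  have h9 : 0 ≤ d^4 * (48 * L^2 * (L-1) - 5) :=
    mul_nonneg (by positivity) (by linarith)
  nlinarith [e1, e2, h8, h9]

private noncomputable def Bfun (m : ℕ) (g p : Fin m → ℝ) : Fin m → ℝ :=
  fun i => ∑ j ∈ univ.filter (fun j => j < i), (Real.log (g j / g i)) ^ 2 * p j

private noncomputable def Ffun (m : ℕ) (g p : Fin m → ℝ) (L : ℝ) : Fin m → ℝ :=
  fun i => Real.exp (-L * Bfun m g p i)

theorem kernel_inequality_special (m : ℕ) (hm : 1 ≤ m) (g p : Fin m → ℝ)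
    (hgmono : ∀ i j : Fin m, i ≤ j → g j ≤ g i)
    (hgpos : ∀ i, 0 < g i)
    (hppos : ∀ i, 0 < p i)
    (hpsum : ∑ i, p i = 1)
    (L : ℝ) (hL : 1.12 ≤ L)
    (hlog : Real.log (g ⟨0, by omega⟩ / g ⟨m - 1, by omega⟩) ≤ 1 / L)
    (hsum : ∑ j ∈ univ.filter (fun j => j < (⟨m - 1, by omega⟩ : Fin m)),
        2 * L * Real.log (g j / g ⟨m - 1, by omega⟩) * p j ≤ 1) :
    ∑ i, (p i / g i) *
        Real.exp (-L * ∑ j ∈ univ.filter (fun j => j < i),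
          (Real.log (g j / g i)) ^ 2 * p j)
      ≤ 1 / ∑ i, p i * g i := by
  clear hsum
  have hL0 : (0:ℝ) < L := by linarith
  have hS : 0 < ∑ i, p i * g i :=
    Finset.sum_pos (fun i _ => mul_pos (hppos i) (hgpos i)) ⟨⟨0, by omega⟩, Finset.mem_univ _⟩
  rw [le_div_iff₀ hS]
  show (∑ i, (p i / g i) * Ffun m g p L i) * (∑ i, p i * g i) ≤ 1
  set B := Bfun m g p with hBdef
  set F := Ffun m g p L with hFdef
  have hBnn : ∀ i, 0 ≤ B i := fun i =>
    Finset.sum_nonneg fun j _ => mul_nonneg (sq_nonneg _) (hppos j).le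
  have hFpos : ∀ i, 0 < F i := fun i => Real.exp_pos _
  -- monotonicity of B
  have hBmono : ∀ i j : Fin m, i ≤ j → B i ≤ B j := by
    intro i j hij
    have hgji : g j ≤ g i := hgmono i j hij
    have step1 : B i ≤ ∑ k ∈ univ.filter (fun k => k < i), (Real.log (g k / g j))^2 * p k := by
      apply Finset.sum_le_sum
      intro k hk
      have hki : k < i := (Finset.mem_filter.mp hk).2
      have hgik : g i ≤ g k := hgmono k i hki.le
      have h1 : 0 ≤ Real.log (g k / g i) :=
        Real.log_nonneg ((one_le_div (hgpos i)).mpr hgik)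
      have h2 : Real.log (g k / g i) ≤ Real.log (g k / g j) := by
        apply Real.log_le_log (div_pos (hgpos k) (hgpos i))
        exact div_le_div_of_nonneg_left (hgpos k).le (hgpos j) hgji
      exact mul_le_mul_of_nonneg_right (pow_le_pow_left₀ h1 h2 2) (hppos k).le
    refine step1.trans ?_
    apply Finset.sum_le_sum_of_subset_of_nonneg
    · intro k hk
      simp only [Finset.mem_filter, Finset.mem_univ, true_and] at hk ⊢
      exact hk.trans_le hij
    · intro k _ _
      exact mul_nonneg (sq_nonneg _) (hppos k).le
  have hFmono : ∀ i j : Fin m, i ≤ j → F j ≤ F i := by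
    intro i j hij
    have := hBmono i j hij
    exact Real.exp_le_exp.mpr (by nlinarith)
  -- log ratio bounds
  have hdelta : ∀ i j : Fin m, i ≤ j → Real.log (g i / g j) ≤ 1 / L := by
    intro i j hij
    refine le_trans ?_ hlog
    apply Real.log_le_log (div_pos (hgpos i) (hgpos j))
    apply div_le_div₀ (hgpos _).le
    · exact hgmono ⟨0, by omega⟩ i (Fin.le_def.mpr (Nat.zero_le _))
    · exact hgpos _
    · exact hgmono j ⟨m - 1, by omega⟩ (by rw [Fin.le_def]; simp; omega)
  -- the pairwise inequality
  have pair : ∀ i j : Fin m, i < j →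
      (g j / g i) * F i + (g i / g j) * F j
        ≤ F i + F j + L * (Real.log (g i / g j))^2 * F j := by
    intro i j hij
    set d := Real.log (g i / g j) with hd
    have hgji : g j ≤ g i := hgmono i j hij.le
    have hd0 : 0 ≤ d := Real.log_nonneg ((one_le_div (hgpos j)).mpr hgji)
    have hdle : d ≤ 1 / L := hdelta i j hij.le
    have key := exp_add_exp_neg_le_key L d hL hd0 hdle
    have hed : Real.exp d = g i / g j := Real.exp_log (div_pos (hgpos i) (hgpos j))
    have hend : Real.exp (-d) = g j / g i := by
      rw [Real.exp_neg, hed, inv_div]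
    have hFji : F j ≤ F i := hFmono i j hij.le
    have hele : Real.exp (-d) ≤ 1 := Real.exp_le_one_iff.mpr (by linarith)
    rw [← hed, ← hend]
    nlinarith [mul_nonneg (sub_nonneg.mpr hele) (sub_nonneg.mpr hFji),
      mul_nonneg (sub_nonneg.mpr key) (hFpos j).le]
  -- set up double sums
  set f : Fin m → Fin m → ℝ := fun i j => (p i / g i * F i) * (p j * g j) with hfdef
  set hh : Fin m → Fin m → ℝ := fun i j =>
    if i < j then p i * p j * (L * (Real.log (g i / g j))^2 * F j) else 0 with hhdef
  have key2 : ∀ i j, f i j + f j i ≤ p i * p j * (F i + F j) + (hh i j + hh j i) := by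
    intro i j
    rcases lt_trichotomy i j with hij | rfl | hji
    · have hp := pair i j hij
      have h1 : hh i j = p i * p j * (L * (Real.log (g i / g j))^2 * F j) := if_pos hij
      have h2 : hh j i = 0 := if_neg (by exact not_lt.mpr hij.le)
      have hgi := (hgpos i).ne'
      have hgj := (hgpos j).ne'
      rw [h1, h2]
      have expand : f i j + f j i = p i * p j * ((g j / g i) * F i + (g i / g j) * F j) := by
        simp only [hfdef]; ring
      rw [expand]
      calc p i * p j * ((g j / g i) * F i + (g i / g j) * F j)
          ≤ p i * p j * (F i + F j + L * (Real.log (g i / g j))^2 * F j) :=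
            mul_le_mul_of_nonneg_left hp (mul_nonneg (hppos i).le (hppos j).le)
        _ = p i * p j * (F i + F j) + p i * p j * (L * (Real.log (g i / g j))^2 * F j) + 0 := by ring
        _ = _ := by ring
    · have h2 : hh i i = 0 := if_neg (lt_irrefl i)
      rw [h2]
      have hgi := (hgpos i).ne'
      have expand : f i i + f i i = p i * p i * (F i + F i) := by
        simp only [hfdef]
        field_simp
      rw [expand]
      linarith
    · have hp := pair j i hji
      have h1 : hh j i = p j * p i * (L * (Real.log (g j / g i))^2 * F i) := if_pos hji
      have h2 : hh i j = 0 := if_neg (by exact not_lt.mpr hji.le)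
      rw [h1, h2]
      have expand : f i j + f j i = p j * p i * ((g i / g j) * F j + (g j / g i) * F i) := by
        simp only [hfdef]; ring
      rw [expand]
      calc p j * p i * ((g i / g j) * F j + (g j / g i) * F i)
          ≤ p j * p i * (F j + F i + L * (Real.log (g j / g i))^2 * F i) :=
            mul_le_mul_of_nonneg_left hp (mul_nonneg (hppos j).le (hppos i).le)
        _ = _ := by ring
  -- fix hdelta omega issue handled above
  -- compute the sums
  have A1 : ∀ i : Fin m, ∑ j, p i * p j * (F i + F j) = p i * F i + p i * ∑ j, p j * F j := by
    intro i
    have hrw : ∀ j : Fin m, p i * p j * (F i + F j) = (p i * F i) * p j + p i * (p j * F j) :=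
      fun j => by ring
    simp_rw [hrw]
    rw [Finset.sum_add_distrib, ← Finset.mul_sum, ← Finset.mul_sum, hpsum, mul_one]
  have A1' : ∑ i, ∑ j, p i * p j * (F i + F j) = 2 * ∑ i, p i * F i := by
    simp_rw [A1]
    rw [Finset.sum_add_distrib, ← Finset.sum_mul, hpsum, one_mul]
    ring
  have A3 : ∑ i, ∑ j, hh i j = ∑ j, p j * L * F j * B j := by
    rw [Finset.sum_comm]
    refine Finset.sum_congr rfl fun j _ => ?_
    have h1 : ∑ i, hh i j
        = ∑ i ∈ univ.filter (fun i => i < j), p i * p j * (L * (Real.log (g i / g j))^2 * F j) :=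
      (Finset.sum_filter _ _).symm
    rw [h1]
    have hrw : ∀ i : Fin m, p i * p j * (L * (Real.log (g i / g j))^2 * F j)
        = (p j * L * F j) * ((Real.log (g i / g j))^2 * p i) := fun i => by ring
    simp_rw [hrw]
    rw [← Finset.mul_sum]
    rfl
  have A4 : ∑ i, ∑ j, hh j i = ∑ i, ∑ j, hh i j := Finset.sum_comm
  have Afswap : ∑ i, ∑ j, f j i = ∑ i, ∑ j, f i j := Finset.sum_comm
  have double : ∑ i, ∑ j, (f i j + f j i) = 2 * ∑ i, ∑ j, f i j := by
    simp_rw [Finset.sum_add_distrib]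
    rw [Afswap]
    ring
  have pointfinal : ∀ j : Fin m, p j * F j + p j * L * F j * B j ≤ p j := by
    intro j
    have h1 : L * B j + 1 ≤ Real.exp (L * B j) := Real.add_one_le_exp _
    have e0 : -L * B j + L * B j = 0 := by ring
    have h2 : F j * Real.exp (L * B j) = 1 := by
      rw [hFdef]
      show Real.exp (-L * B j) * Real.exp (L * B j) = 1
      rw [← Real.exp_add, e0, Real.exp_zero]
    nlinarith [hFpos j, (hppos j).le, hBnn j,
      mul_le_mul_of_nonneg_left h1 (hFpos j).le]
  have main : ∑ i, ∑ j, f i j ≤ 1 := by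
    have total : 2 * (∑ i, ∑ j, f i j) ≤ 2 := by
      rw [← double]
      calc ∑ i, ∑ j, (f i j + f j i)
          ≤ ∑ i, ∑ j, (p i * p j * (F i + F j) + (hh i j + hh j i)) :=
            Finset.sum_le_sum fun i _ => Finset.sum_le_sum fun j _ => key2 i j
        _ = 2 * ∑ i, p i * F i + 2 * ∑ j, p j * L * F j * B j := by
            simp_rw [Finset.sum_add_distrib]
            rw [A1', A4, A3]
            ring
        _ = 2 * ∑ j, (p j * F j + p j * L * F j * B j) := by
            rw [Finset.sum_add_distrib]; ring
        _ ≤ 2 * ∑ j, p j := by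
            have := Finset.sum_le_sum (fun j (_ : j ∈ univ) => pointfinal j)
            linarith
        _ = 2 := by rw [hpsum]; norm_num
    linarith
  calc (∑ i, p i / g i * F i) * (∑ i, p i * g i)
      = ∑ i, ∑ j, (p i / g i * F i) * (p j * g j) := Finset.sum_mul_sum _ _ _ _
    _ ≤ 1 := main
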